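/- arXiv:1801.09939 — 6 statements merged into one kernel-verified Lean document; each statement's English description precedes it below -/
import Mathlib

section
/- For every r with 0 ≤ r ≤ n one has E_r(x) = Σ_{k=0}^{⌊r/2⌋} binom(n−r+2k, k) · m_{(1^{r−2k})}(x), where binom(·,·) denotes the ordinary binomial coefficient. -/
open Finset Sum
open scoped symmDiff

section Aux
variable {K : Type*} [Field K]

theorem prod_disjSum' {α β M : Type*} [CommMonoid M] (s : Finset α) (t : Finset β)
    (f : α ⊕ β → M) :
    ∏ i ∈ s.disjSum t, f i = (∏ a ∈ s, f (inl a)) * ∏ b ∈ t, f (inr b) := by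
  rw [← Finset.map_inl_disjUnion_map_inr, Finset.prod_disjUnion, Finset.prod_map,
    Finset.prod_map]
  rfl

theorem prod_toLeft_toRight {α β M : Type*} [CommMonoid M] (u : Finset (α ⊕ β))
    (f : α ⊕ β → M) :
    ∏ i ∈ u, f i = (∏ a ∈ u.toLeft, f (inl a)) * ∏ b ∈ u.toRight, f (inr b) := by
  conv_lhs => rw [← Finset.toLeft_disjSum_toRight (u := u)]
  rw [prod_disjSum']

theorem E_aux {n : ℕ} (x : Fin n → K) (hx : ∀ i, x i ≠ 0)
    (r : ℕ) (hr : r ≤ n) :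
    (Multiset.map x Finset.univ.val + Multiset.map (fun i => (x i)⁻¹) Finset.univ.val).esymm r =
      ∑ k ∈ range (r / 2 + 1), ((n - r + 2 * k).choose k : K) *
        (∑ S ∈ Finset.univ.powersetCard (r - 2*k),
          ∑ P ∈ S.powerset, (∏ i ∈ P, x i) * ∏ i ∈ S \ P, (x i)⁻¹) := by
  classical
  set f : Fin n ⊕ Fin n → K := Sum.elim x (fun i => (x i)⁻¹) with hf
  -- Step A
  have hA : (Multiset.map x Finset.univ.val
      + Multiset.map (fun i => (x i)⁻¹) Finset.univ.val).esymm r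
      = ∑ T ∈ (univ : Finset (Fin n ⊕ Fin n)).powersetCard r, ∏ i ∈ T, f i := by
    have h : Multiset.map x Finset.univ.val + Multiset.map (fun i => (x i)⁻¹) Finset.univ.val
        = (univ : Finset (Fin n ⊕ Fin n)).val.map f := by
      rw [← Finset.univ_disjSum_univ, Finset.val_disjSum, Multiset.disjSum, Multiset.map_add,
        Multiset.map_map, Multiset.map_map]
      rfl
    rw [h, Finset.esymm_map_val]
  -- Step B : RHS as a sum over a sigma finset
  set idx : Finset (Σ _ : ℕ, Σ _ : Finset (Fin n), Σ _ : Finset (Fin n), Finset (Fin n)) :=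
    (range (r / 2 + 1)).sigma (fun k => (Finset.univ.powersetCard (r - 2*k)).sigma
      (fun S => S.powerset.sigma (fun _ => Sᶜ.powersetCard k))) with hidx
  set g : (Σ _ : ℕ, Σ _ : Finset (Fin n), Σ _ : Finset (Fin n), Finset (Fin n)) → K :=
    fun q => (∏ i ∈ q.2.2.1, x i) * ∏ i ∈ q.2.1 \ q.2.2.1, (x i)⁻¹ with hg
  have hB : ∑ k ∈ range (r / 2 + 1), ((n - r + 2 * k).choose k : K) *
        (∑ S ∈ Finset.univ.powersetCard (r - 2*k),
          ∑ P ∈ S.powerset, (∏ i ∈ P, x i) * ∏ i ∈ S \ P, (x i)⁻¹)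
      = ∑ q ∈ idx, g q := by
    rw [hidx, Finset.sum_sigma]
    refine Finset.sum_congr rfl fun k hk => ?_
    rw [Finset.sum_sigma, Finset.mul_sum]
    refine Finset.sum_congr rfl fun S hS => ?_
    rw [Finset.sum_sigma, Finset.mul_sum]
    refine Finset.sum_congr rfl fun P hP => ?_
    have hk' : 2 * k ≤ r := by
      simp only [Finset.mem_range] at hk; omega
    have hScard : S.card = r - 2*k := (Finset.mem_powersetCard_univ.mp hS)
    have hcompl : Sᶜ.card = n - r + 2*k := by
      rw [Finset.card_compl, hScard, Fintype.card_fin]; omega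
    simp only [hg]
    rw [Finset.sum_const, nsmul_eq_mul, Finset.card_powersetCard, hcompl]
  rw [hA, hB]
  -- Step C : bijection
  refine Finset.sum_bij'
    (fun T _ => (⟨(T.toLeft ∩ T.toRight).card,
        T.toLeft ∆ T.toRight, T.toLeft \ T.toRight, T.toLeft ∩ T.toRight⟩ :
        Σ _ : ℕ, Σ _ : Finset (Fin n), Σ _ : Finset (Fin n), Finset (Fin n)))
    (fun q _ => (q.2.2.1 ∪ q.2.2.2).disjSum ((q.2.1 \ q.2.2.1) ∪ q.2.2.2))
    ?_ ?_ ?_ ?_ ?_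
  · -- hi : to T ∈ idx
    intro T hT
    have hTc : T.toLeft.card + T.toRight.card = r := by
      rw [Finset.card_toLeft_add_card_toRight]
      exact (Finset.mem_powersetCard.mp hT).2
    have hca : (T.toLeft ∩ T.toRight).card ≤ T.toLeft.card :=
      Finset.card_le_card Finset.inter_subset_left
    have hcb : (T.toLeft ∩ T.toRight).card ≤ T.toRight.card :=
      Finset.card_le_card Finset.inter_subset_right
    have hsd : (T.toLeft ∆ T.toRight).card = r - 2 * (T.toLeft ∩ T.toRight).card := by
      rw [symmDiff_def, sup_eq_union,
        Finset.card_union_of_disjoint disjoint_sdiff_sdiff]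
      have h1 : (T.toLeft \ T.toRight).card + (T.toLeft ∩ T.toRight).card = T.toLeft.card :=
        Finset.card_sdiff_add_card_inter _ _
      have h2 : (T.toRight \ T.toLeft).card + (T.toRight ∩ T.toLeft).card = T.toRight.card :=
        Finset.card_sdiff_add_card_inter _ _
      rw [Finset.inter_comm] at h2
      omega
    simp only [hidx, Finset.mem_sigma, Finset.mem_range, Finset.mem_powersetCard_univ,
      Finset.mem_powerset]
    refine ⟨by omega, hsd, ?_, ?_⟩
    · rw [symmDiff_def, sup_eq_union]; exact Finset.subset_union_left
    · rw [Finset.mem_powersetCard]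
      refine ⟨fun i hi => ?_, rfl⟩
      simp only [Finset.mem_compl, Finset.mem_symmDiff]
      simp only [Finset.mem_inter] at hi
      tauto
  · -- hj : from q ∈ powersetCard r univ
    rintro ⟨k, S, P, C⟩ hq
    simp only [hidx, Finset.mem_sigma, Finset.mem_range, Finset.mem_powersetCard_univ,
      Finset.mem_powerset, Finset.mem_powersetCard] at hq
    obtain ⟨hk, hS, hP, hCsub, hCcard⟩ := hq
    have hk' : 2 * k ≤ r := by omega
    have hdSC : Disjoint S C := by
      rw [Finset.disjoint_right]
      intro i hiC
      exact Finset.mem_compl.mp (hCsub hiC)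
    rw [Finset.mem_powersetCard_univ, Finset.card_disjSum,
      Finset.card_union_of_disjoint (hdSC.mono_left hP),
      Finset.card_union_of_disjoint (hdSC.mono_left (Finset.sdiff_subset)),
      Finset.card_sdiff_of_subset hP]
    have := Finset.card_le_card hP
    omega
  · -- left_inv
    intro T hT
    set A := T.toLeft; set B := T.toRight
    have h1 : A \ B ∪ A ∩ B = A := Finset.sdiff_union_inter A B
    have h2 : A ∆ B \ (A \ B) ∪ A ∩ B = B := by
      rw [symmDiff_def, sup_eq_union, Finset.union_sdiff_cancel_left disjoint_sdiff_sdiff,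
        Finset.inter_comm, Finset.sdiff_union_inter]
    simp only [h1, h2]
    exact Finset.toLeft_disjSum_toRight
  · -- right_inv
    rintro ⟨k, S, P, C⟩ hq
    simp only [hidx, Finset.mem_sigma, Finset.mem_range, Finset.mem_powersetCard_univ,
      Finset.mem_powerset, Finset.mem_powersetCard] at hq
    obtain ⟨hk, hS, hP, hCsub, hCcard⟩ := hq
    have hPS : ∀ i ∈ P, i ∈ S := fun i hi => hP hi
    have hCS : ∀ i ∈ C, i ∉ S := fun i hi => Finset.mem_compl.mp (hCsub hi)
    simp only [Finset.toLeft_disjSum, Finset.toRight_disjSum]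
    have e1 : (P ∪ C) ∩ (S \ P ∪ C) = C := by
      ext i
      simp only [Finset.mem_inter, Finset.mem_union, Finset.mem_sdiff]
      have := hPS i; have := hCS i; tauto
    have e2 : (P ∪ C) ∆ (S \ P ∪ C) = S := by
      ext i
      simp only [Finset.mem_symmDiff, Finset.mem_union, Finset.mem_sdiff]
      have := hPS i; have := hCS i; tauto
    have e3 : (P ∪ C) \ (S \ P ∪ C) = P := by
      ext i
      simp only [Finset.mem_sdiff, Finset.mem_union]
      have := hPS i; have := hCS i; tauto
    rw [e1, e2, e3, hCcard]
  · -- term equality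
    intro T hT
    set A := T.toLeft; set B := T.toRight
    simp only [hg]
    have h2 : A ∆ B \ (A \ B) = B \ A := by
      rw [symmDiff_def, sup_eq_union, Finset.union_sdiff_cancel_left disjoint_sdiff_sdiff]
    rw [prod_toLeft_toRight T f, h2]
    simp only [hf, Sum.elim_inl, Sum.elim_inr]
    have hA' : ∏ i ∈ A, x i = (∏ i ∈ A \ B, x i) * ∏ i ∈ A ∩ B, x i := by
      rw [← Finset.prod_union (Finset.disjoint_sdiff_inter A B), Finset.sdiff_union_inter]
    have hB' : ∏ i ∈ B, (x i)⁻¹ = (∏ i ∈ B \ A, (x i)⁻¹) * ∏ i ∈ A ∩ B, (x i)⁻¹ := by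
      rw [Finset.inter_comm A B,
        ← Finset.prod_union (Finset.disjoint_sdiff_inter B A), Finset.sdiff_union_inter]
    have hone : (∏ i ∈ A ∩ B, x i) * ∏ i ∈ A ∩ B, (x i)⁻¹ = 1 := by
      rw [← Finset.prod_mul_distrib]
      exact Finset.prod_eq_one fun i _ => mul_inv_cancel₀ (hx i)
    rw [hA', hB']
    calc ((∏ i ∈ A \ B, x i) * ∏ i ∈ A ∩ B, x i) *
          ((∏ i ∈ B \ A, (x i)⁻¹) * ∏ i ∈ A ∩ B, (x i)⁻¹)
        = ((∏ i ∈ A \ B, x i) * ∏ i ∈ B \ A, (x i)⁻¹) *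
          ((∏ i ∈ A ∩ B, x i) * ∏ i ∈ A ∩ B, (x i)⁻¹) := by ring
      _ = (∏ i ∈ A \ B, x i) * ∏ i ∈ B \ A, (x i)⁻¹ := by rw [hone, mul_one]

end Aux


open Finset

noncomputable section

variable {K : Type*} [Field K]

/-- `E_r(x)`: the `r`-th elementary symmetric polynomial of the `2n` elements
`x₁,…,xₙ,x₁⁻¹,…,xₙ⁻¹`. -/
def E {n : ℕ} (x : Fin n → K) (r : ℕ) : K :=
  (Multiset.map x Finset.univ.val + Multiset.map (fun i => (x i)⁻¹) Finset.univ.val).esymm r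

/-- `m_{(1^s)}(x)`: the type `Cₙ` one-column monomial symmetric polynomial
`Σ_{S ⊆ {1,…,n}, |S| = s} Σ_{ε : S → {±1}} ∏_{i ∈ S} xᵢ^{ε(i)}`
(encoded by the subset `P ⊆ S` of indices with `ε(i) = +1`). -/
def mcol {n : ℕ} (x : Fin n → K) (s : ℕ) : K :=
  ∑ S ∈ Finset.univ.powersetCard s,
    ∑ P ∈ S.powerset, (∏ i ∈ P, x i) * ∏ i ∈ S \ P, (x i)⁻¹

/-- Lemma 3.4 of Hoshino–Shiraishi:
`E_r(x) = Σ_{k=0}^{⌊r/2⌋} binom(n−r+2k, k) · m_{(1^{r−2k})}(x)`. -/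
theorem E_eq_sum_mcol {n : ℕ} (hn : 0 < n) (x : Fin n → K) (hx : ∀ i, x i ≠ 0)
    (r : ℕ) (hr : r ≤ n) :
    E x r = ∑ k ∈ range (r / 2 + 1), ((n - r + 2 * k).choose k : K) * mcol x (r - 2 * k) := by
  unfold E mcol
  exact E_aux x hx r hr
end
end

section
/- For every r with 2 ≤ r ≤ n one has E_r(x) − E_{r−2}(x) = Σ_{k=0}^{⌊r/2⌋} ( binom(n−r+2k, k) − binom(n−r+2k, k−1) ) · m_{(1^{r−2k})}(x), where binom(·,·) is the ordinary binomial coefficient and binom(n,−1) = 0. (The left-hand side is the type Cₙ Schur polynomial s^{(Cₙ)}_{(1^r)}(x) with one-column diagram, and the coefficient equals the ballot number (n−r+1)/(n−r+k+1) · binom(n−r+2k, k).) -/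
open Finset
open scoped symmDiff

noncomputable section

variable {K : Type*} [Field K]

lemma E_eq_sum_pairs {n : ℕ} (x : Fin n → K) (m : ℕ) :
    E x m = ∑ p ∈ ((univ ×ˢ univ : Finset (Finset (Fin n) × Finset (Fin n))).filter
        fun p => p.1.card + p.2.card = m),
      (∏ i ∈ p.1, x i) * ∏ i ∈ p.2, (x i)⁻¹ := by
  have h1 : (Multiset.map x Finset.univ.val + Multiset.map (fun i => (x i)⁻¹) Finset.univ.val)
      = Multiset.map (Sum.elim x (fun i => (x i)⁻¹)) (univ : Finset (Fin n ⊕ Fin n)).val := by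
    rw [← Finset.univ_disjSum_univ, Finset.val_disjSum, Multiset.disjSum, Multiset.map_add,
      Multiset.map_map, Multiset.map_map]
    rfl
  rw [E, h1, Finset.esymm_map_val]
  refine Finset.sum_nbij' (fun A => (A.toLeft, A.toRight)) (fun p => p.1.disjSum p.2) ?_ ?_ ?_ ?_ ?_
  · intro A hA
    simp only [mem_powersetCard_univ] at hA
    simp [← hA, card_toLeft_add_card_toRight]
  · intro p hp
    simp only [mem_filter] at hp
    simp [mem_powersetCard_univ, hp.2]
  · intro A _; exact toLeft_disjSum_toRight
  · intro p _; simp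
  · intro A hA
    rw [← toLeft_disjSum_toRight (u := A), Finset.prod_disjSum]
    simp

lemma card_symmDiff_aux {n : ℕ} (A B : Finset (Fin n)) :
    (A ∆ B).card + 2 * (A ∩ B).card = A.card + B.card := by
  classical
  have h1 : A ∆ B = (A \ B) ∪ (B \ A) := by
    ext i; simp [Finset.mem_symmDiff]
  have hd : Disjoint (A \ B) (B \ A) := by
    rw [Finset.disjoint_left]; intro i hi; simp_all
  have h2 : (A ∆ B).card = (A \ B).card + (B \ A).card := by
    rw [h1, Finset.card_union_of_disjoint hd]
  have h3 : (A \ B).card + (A ∩ B).card = A.card := by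
    rw [Finset.card_sdiff_add_card_inter]
  have h4 : (B \ A).card + (B ∩ A).card = B.card := by
    rw [Finset.card_sdiff_add_card_inter]
  have h5 : (B ∩ A).card = (A ∩ B).card := by rw [Finset.inter_comm]
  omega

lemma E_eq_sum_triples {n : ℕ} (x : Fin n → K) (hx : ∀ i, x i ≠ 0) (m : ℕ) :
    E x m = ∑ q ∈ (((univ ×ˢ univ) ×ˢ univ :
        Finset ((Finset (Fin n) × Finset (Fin n)) × Finset (Fin n))).filter
        fun q => q.1.2 ⊆ q.1.1 ∧ Disjoint q.2 q.1.1 ∧ q.1.1.card + 2 * q.2.card = m),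
      (∏ i ∈ q.1.2, x i) * ∏ i ∈ q.1.1 \ q.1.2, (x i)⁻¹ := by
  rw [E_eq_sum_pairs]
  refine Finset.sum_nbij' (fun p => ((p.1 ∆ p.2, p.1 \ p.2), p.1 ∩ p.2))
    (fun q => (q.1.2 ∪ q.2, (q.1.1 \ q.1.2) ∪ q.2)) ?_ ?_ ?_ ?_ ?_
  · rintro ⟨A, B⟩ hp
    simp only [mem_filter, mem_product, mem_univ, true_and] at hp ⊢
    refine ⟨fun i hi => ?_, ?_, ?_⟩
    · simp only [Finset.mem_sdiff] at hi
      simp [Finset.mem_symmDiff, hi.1, hi.2]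
    · rw [Finset.disjoint_left]
      intro i hi
      simp only [Finset.mem_inter] at hi
      simp [Finset.mem_symmDiff, hi.1, hi.2]
    · rw [card_symmDiff_aux, hp]
  · rintro ⟨⟨S, P⟩, C⟩ hq
    simp only [mem_filter, mem_product, mem_univ, true_and] at hq ⊢
    obtain ⟨hPS, hCS, hcard⟩ := hq
    rw [Finset.disjoint_left] at hCS
    have hdP : Disjoint P C := by
      rw [Finset.disjoint_left]; intro i hi hic; exact hCS hic (hPS hi)
    have hdQ : Disjoint (S \ P) C := by
      rw [Finset.disjoint_left]; intro i hi hic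
      exact hCS hic (Finset.mem_sdiff.1 hi).1
    rw [Finset.card_union_of_disjoint hdP, Finset.card_union_of_disjoint hdQ,
      Finset.card_sdiff_of_subset hPS]
    have := Finset.card_le_card hPS
    omega
  · rintro ⟨A, B⟩ hp
    simp only [Prod.mk.injEq]
    constructor
    · ext i; simp [Finset.mem_symmDiff]; tauto
    · ext i; simp [Finset.mem_symmDiff]; tauto
  · rintro ⟨⟨S, P⟩, C⟩ hq
    simp only [mem_filter, mem_product, mem_univ, true_and] at hq
    obtain ⟨hPS, hCS, hcard⟩ := hq
    rw [Finset.disjoint_left] at hCS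
    have hP : ∀ i, i ∈ P → i ∈ S := fun i hi => hPS hi
    have hC : ∀ i, i ∈ C → i ∉ S := fun i hi h => hCS hi h
    simp only [Prod.mk.injEq]
    refine ⟨⟨?_, ?_⟩, ?_⟩
    · ext i
      simp only [Finset.mem_symmDiff, Finset.mem_union, Finset.mem_sdiff, not_or, not_and,
        Decidable.not_not]
      have := hP i; have := hC i; tauto
    · ext i
      simp only [Finset.mem_sdiff, Finset.mem_union, not_or, not_and, Decidable.not_not]
      have := hP i; have := hC i; tauto
    · ext i
      simp only [Finset.mem_inter, Finset.mem_union, Finset.mem_sdiff]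
      have := hP i; have := hC i; tauto
  · rintro ⟨A, B⟩ hp
    have h1 : (A ∆ B) \ (A \ B) = B \ A := by
      ext i; simp [Finset.mem_symmDiff]; tauto
    simp only [h1]
    have h2 : ∏ i ∈ A, x i = (∏ i ∈ A \ B, x i) * ∏ i ∈ A ∩ B, x i := by
      rw [← Finset.prod_sdiff (Finset.inter_subset_left), Finset.sdiff_inter_self_left]
    have h3 : ∏ i ∈ B, (x i)⁻¹ = (∏ i ∈ B \ A, (x i)⁻¹) * ∏ i ∈ A ∩ B, (x i)⁻¹ := by
      rw [← Finset.prod_sdiff (Finset.inter_subset_right), Finset.sdiff_inter_self_right]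
    have h4 : (∏ i ∈ A ∩ B, x i) * ∏ i ∈ A ∩ B, (x i)⁻¹ = 1 := by
      rw [← Finset.prod_mul_distrib]
      exact Finset.prod_eq_one fun i _ => mul_inv_cancel₀ (hx i)
    calc (∏ i ∈ A, x i) * ∏ i ∈ B, (x i)⁻¹
        = ((∏ i ∈ A \ B, x i) * ∏ i ∈ B \ A, (x i)⁻¹) *
            ((∏ i ∈ A ∩ B, x i) * ∏ i ∈ A ∩ B, (x i)⁻¹) := by rw [h2, h3]; ring
      _ = (∏ i ∈ A \ B, x i) * ∏ i ∈ B \ A, (x i)⁻¹ := by rw [h4, mul_one]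

set_option maxHeartbeats 2000000 in
lemma E_eq {n : ℕ} (x : Fin n → K) (hx : ∀ i, x i ≠ 0) (m : ℕ) (hm : m ≤ n) :
    E x m = ∑ k ∈ range (m / 2 + 1),
      ((n - m + 2 * k).choose k : K) * mcol x (m - 2 * k) := by
  rw [E_eq_sum_triples x hx m]
  rw [← Finset.sum_fiberwise_of_maps_to (g := fun q => q.2.card) (t := range (m / 2 + 1))
    (fun q hq => by
      simp only [mem_filter] at hq
      simp only [mem_range]
      omega)]
  refine Finset.sum_congr rfl fun k hk => ?_
  simp only [mem_range] at hk
  have hk2 : 2 * k ≤ m := by omega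
  have key : ∀ q : (Finset (Fin n) × Finset (Fin n)) × Finset (Fin n),
      (q ∈ (((univ ×ˢ univ) ×ˢ univ).filter
        fun q => q.1.2 ⊆ q.1.1 ∧ Disjoint q.2 q.1.1 ∧ q.1.1.card + 2 * q.2.card = m).filter
        fun q => q.2.card = k)
      ↔ q.1 ∈ ((univ ×ˢ univ : Finset (Finset (Fin n) × Finset (Fin n))).filter
          fun p => p.2 ⊆ p.1 ∧ p.1.card = m - 2 * k)
        ∧ q.2 ∈ (univ \ q.1.1).powersetCard k := by
    rintro ⟨⟨S, P⟩, C⟩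
    simp only [mem_filter, mem_product, mem_univ, true_and, Finset.mem_powersetCard,
      Finset.subset_sdiff, Finset.subset_univ, true_and]
    constructor
    · rintro ⟨⟨h1, h2, h3⟩, h4⟩
      exact ⟨⟨h1, by omega⟩, ⟨h2, h4⟩⟩
    · rintro ⟨⟨h1, h2⟩, h3, h4⟩
      refine ⟨⟨h1, h3, by omega⟩, h4⟩
  rw [Finset.sum_finset_product _ _ (fun p => (univ \ p.1).powersetCard k) key]
  have hcoef : ∀ p : Finset (Fin n) × Finset (Fin n),
      p ∈ ((univ ×ˢ univ : Finset (Finset (Fin n) × Finset (Fin n))).filter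
          fun p => p.2 ⊆ p.1 ∧ p.1.card = m - 2 * k) →
      ∑ C ∈ (univ \ p.1).powersetCard k,
        ((∏ i ∈ p.2, x i) * ∏ i ∈ p.1 \ p.2, (x i)⁻¹)
      = ((n - m + 2 * k).choose k : K) *
          ((∏ i ∈ p.2, x i) * ∏ i ∈ p.1 \ p.2, (x i)⁻¹) := by
    intro p hp
    simp only [mem_filter, mem_product, mem_univ, true_and] at hp
    rw [Finset.sum_const, Finset.card_powersetCard, Finset.card_sdiff_of_subset (Finset.subset_univ _),
      Finset.card_univ, Fintype.card_fin, hp.2]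
    have : n - (m - 2 * k) = n - m + 2 * k := by omega
    rw [this, nsmul_eq_mul]
  rw [Finset.sum_congr rfl hcoef, ← Finset.mul_sum]
  congr 1
  rw [mcol]
  rw [Finset.sum_sigma']
  refine (Finset.sum_nbij'
    (fun p : Finset (Fin n) × Finset (Fin n) => (⟨p.1, p.2⟩ : Σ _ : Finset (Fin n), Finset (Fin n)))
    (fun q : Σ _ : Finset (Fin n), Finset (Fin n) => (q.1, q.2)) ?_ ?_ ?_ ?_ ?_)
  · rintro ⟨S, P⟩ hp
    simp only [mem_filter, mem_product, mem_univ, true_and] at hp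
    simp [Finset.mem_sigma, mem_powersetCard_univ, hp.2, Finset.mem_powerset, hp.1]
  · rintro ⟨S, P⟩ hq
    simp only [Finset.mem_sigma, mem_powersetCard_univ, Finset.mem_powerset] at hq
    simp only [mem_filter, mem_product, mem_univ, true_and]
    exact ⟨hq.2, hq.1⟩
  · intros; rfl
  · intros; rfl
  · intros; rfl

/-- The type `Cₙ` Schur polynomial with one-column diagram `s^{(Cₙ)}_{(1^r)}(x) = E_r − E_{r−2}`
expands in the monomials with ballot-number coefficients
`binom(n−r+2k, k) − binom(n−r+2k, k−1)` (with `binom(n,−1) = 0`). -/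
theorem schurC_eq_sum_mcol {n : ℕ} (hn : 0 < n) (x : Fin n → K) (hx : ∀ i, x i ≠ 0)
    (r : ℕ) (hr2 : 2 ≤ r) (hr : r ≤ n) :
    E x r - E x (r - 2)
      = ∑ k ∈ range (r / 2 + 1),
          (((n - r + 2 * k).choose k : K) -
            (if k = 0 then 0 else ((n - r + 2 * k).choose (k - 1) : K))) *
          mcol x (r - 2 * k) := by
  rw [E_eq x hx r hr, E_eq x hx (r - 2) (by omega)]
  simp only [sub_mul]
  rw [Finset.sum_sub_distrib]
  congr 1
  have hhalf : (r - 2) / 2 + 1 = r / 2 := by omega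
  rw [hhalf]
  rw [Finset.sum_range_succ' (fun k =>
    (if k = 0 then (0 : K) else ((n - r + 2 * k).choose (k - 1) : K)) * mcol x (r - 2 * k)) (r / 2)]
  simp only [if_neg (Nat.succ_ne_zero _), if_true, eq_self_iff_true, zero_mul, add_zero]
  refine Finset.sum_congr rfl fun j hj => ?_
  simp only [mem_range] at hj
  have h1 : n - (r - 2) + 2 * j = n - r + 2 * (j + 1) := by omega
  have h2 : r - 2 - 2 * j = r - 2 * (j + 1) := by omega
  rw [h1, h2]
  simp
end
end

section
/- For every i ≥ 2 one has B̃(1,i) = B̃(t², i−1) in the field K, i.e., B̃(1,i) − B̃(t², i−1) = 0. -/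
open Finset

noncomputable section

/-- The field `K = ℚ(a,c,t)`. -/
abbrev K : Type := FractionRing (MvPolynomial (Fin 3) ℚ)

def va : K := algebraMap (MvPolynomial (Fin 3) ℚ) K (MvPolynomial.X 0)
def vc : K := algebraMap (MvPolynomial (Fin 3) ℚ) K (MvPolynomial.X 1)
def vt : K := algebraMap (MvPolynomial (Fin 3) ℚ) K (MvPolynomial.X 2)

/-- The q-Pochhammer symbol `(z;u)_k = ∏_{i=0}^{k-1} (1 - u^i z)`. -/
def poch (z u : K) (k : ℕ) : K := ∏ i ∈ range k, (1 - u ^ i * z)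

/-- The coefficient `B(w,j)`. -/
def B (w : K) (j : ℕ) : K :=
  if j = 0 then 1 else
    (-1 : K) ^ j * w ^ (-(j : ℤ)) * poch (w ^ 2) (vt ^ 2) (j - 1) *
      (1 - w ^ 2 * vt ^ (4 * (j : ℤ) - 2)) * (poch (vt ^ 2) (vt ^ 2) j)⁻¹ *
      ∑ k ∈ range (j + 1),
        (vt ^ (2 * k) * poch (-(w * va ^ 2)) (vt ^ 2) k * poch (-(w * vc ^ 2)) (vt ^ 2) k *
            poch (w ^ 2 * vt ^ (2 * (j : ℤ) - 2)) (vt ^ 2) k *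
            poch (vt ^ (-(2 * (j : ℤ)))) (vt ^ 2) k) /
          (poch (vt ^ 2) (vt ^ 2) k * poch (-w) (vt ^ 2) k * poch (-(w * vt)) (vt ^ 2) k *
            poch (w ^ 2 * va ^ 2 * vc ^ 2 * vt⁻¹) (vt ^ 2) k)

/-- The coefficient `B̃(w,j)`. -/
def Bt (w : K) (j : ℕ) : K :=
  (w * vt ^ ((j : ℤ) - 1)) ^ (-(j : ℤ)) * poch (w ^ 2 * vt ^ (2 * j)) (vt ^ 2) j *
    (poch (vt ^ 2) (vt ^ 2) j)⁻¹ *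
    ∑ k ∈ range (j + 1),
      (vt ^ (2 * k) * poch (-(vt ^ (2 - 2 * (j : ℤ)) * w⁻¹ * (va ^ 2)⁻¹)) (vt ^ 2) k *
          poch (-(vt ^ (2 - 2 * (j : ℤ)) * w⁻¹ * (vc ^ 2)⁻¹)) (vt ^ 2) k *
          poch (vt ^ (2 - 2 * (j : ℤ)) * (w ^ 2)⁻¹) (vt ^ 2) k *
          poch (vt ^ (-(2 * (j : ℤ)))) (vt ^ 2) k) /
        (poch (vt ^ 2) (vt ^ 2) k * poch (-(vt ^ (1 - 2 * (j : ℤ)) * w⁻¹)) (vt ^ 2) k *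
          poch (-(vt ^ (2 - 2 * (j : ℤ)) * w⁻¹)) (vt ^ 2) k *
          poch (vt ^ (5 - 4 * (j : ℤ)) * (w ^ 2)⁻¹ * (va ^ 2)⁻¹ * (vc ^ 2)⁻¹) (vt ^ 2) k)

/-- The function `f(w)`. -/
def f (w : K) : K :=
  ((1 - w⁻¹) * (1 - vt ^ 2 * w⁻¹ * (va ^ 2)⁻¹ * (vc ^ 2)⁻¹) * (1 + vt * w⁻¹ * (va ^ 2)⁻¹) *
      (1 + vt * w⁻¹ * (vc ^ 2)⁻¹)) /
    ((1 - vt * (w ^ 2)⁻¹ * (va ^ 2)⁻¹ * (vc ^ 2)⁻¹) *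
      (1 - vt ^ 3 * (w ^ 2)⁻¹ * (va ^ 2)⁻¹ * (vc ^ 2)⁻¹))

/-- The generalized binomial coefficient `binom(n,k) = n(n−1)⋯(n−k+1)/k!` with integer top. -/
def binomZ (n : ℤ) (k : ℕ) : ℚ := (∏ i ∈ range k, ((n : ℚ) - (i : ℚ))) / (k.factorial : ℚ)

/-- The coefficient `C_m(j) = Σ_{i=0}^{j} B(t^{m+1}, i) · binom(m+2j, j−i)`. -/
def Cc (m : ℤ) (j : ℕ) : K :=
  ∑ i ∈ range (j + 1), B (vt ^ (m + 1)) i * (binomZ (m + 2 * j) (j - i) : ℚ)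

lemma ht : vt ≠ 0 := by
  simp only [vt, ne_eq, map_eq_zero_iff _ (IsFractionRing.injective (MvPolynomial (Fin 3) ℚ) K)]
  exact MvPolynomial.X_ne_zero 2

lemma h1t (n : ℕ) (hn : 0 < n) : (1 : K) - vt ^ n ≠ 0 := by
  rw [sub_ne_zero]
  intro h
  have : (MvPolynomial.X 2 : MvPolynomial (Fin 3) ℚ) ^ n = 1 := by
    apply IsFractionRing.injective (MvPolynomial (Fin 3) ℚ) K
    rw [map_pow, map_one]
    exact h.symm
  have := congrArg (MvPolynomial.coeff 0) this
  rw [MvPolynomial.coeff_X_pow, MvPolynomial.coeff_one] at this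
  simp [Finsupp.single_eq_zero, hn.ne'] at this

lemma poch_succ' (z u : K) (n : ℕ) : poch z u (n+1) = (1 - z) * poch (u * z) u n := by
  rw [poch, poch, Finset.prod_range_succ', pow_zero, one_mul, mul_comm]
  congr 1
  exact Finset.prod_congr rfl fun i _ => by rw [pow_succ]; ring

lemma poch_ne (n : ℕ) : poch (vt^2) (vt^2) n ≠ 0 := by
  rw [poch]
  apply Finset.prod_ne_zero_iff.mpr
  intro i _
  have : ((vt^2)^i * vt^2 : K) = vt ^ (2*i+2) := by rw [← pow_mul, ← pow_add]
  rw [this]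
  exact h1t _ (by omega)
lemma sum_ext (n : ℕ) (f g : ℕ → K) (h : ∀ k, k ≤ n → f k = g k) (h0 : f (n + 1) = 0) :
    ∑ k ∈ range (n + 1 + 1), f k = ∑ k ∈ range (n + 1), g k := by
  rw [Finset.sum_range_succ, h0, add_zero]
  exact Finset.sum_congr rfl fun k hk => h k (Nat.lt_succ_iff.mp (Finset.mem_range.mp hk))

/-- Lemma 6.4 of Hoshino–Shiraishi: `B̃(1,i) − B̃(t²,i−1) = 0` for every `i ≥ 2`. -/
theorem Bt_one_special (i : ℕ) (hi : 2 ≤ i) : Bt 1 i = Bt (vt ^ 2) (i - 1) := by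
  obtain ⟨j, rfl⟩ : ∃ j, i = j + 2 := ⟨i - 2, by omega⟩
  have h1 : j + 2 - 1 = j + 1 := by omega
  rw [h1, Bt, Bt]
  push_cast
  simp only [one_mul, one_pow, inv_one, mul_one]
  have e2 : ((vt : K) ^ 2)⁻¹ = vt ^ (-2 : ℤ) := by rw [← zpow_natCast vt 2, ← zpow_neg]; norm_num
  have e4 : (((vt : K) ^ 2) ^ 2)⁻¹ = vt ^ (-4 : ℤ) := by
    rw [← pow_mul, ← zpow_natCast vt (2 * 2), ← zpow_neg]; norm_num
  have f1 : vt ^ (2 - 2 * ((j : ℤ) + 1)) * vt ^ (-2 : ℤ) = vt ^ (2 - 2 * ((j : ℤ) + 2)) := by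
    rw [← zpow_add₀ ht]
    exact congrArg (vt ^ ·) (by ring)
  have f2 : vt ^ (2 - 2 * ((j : ℤ) + 1)) * vt ^ (-4 : ℤ) = vt ^ (-(2 * ((j : ℤ) + 2))) := by
    rw [← zpow_add₀ ht]
    exact congrArg (vt ^ ·) (by ring)
  have f3 : vt ^ (-(2 * ((j : ℤ) + 1))) = vt ^ (2 - 2 * ((j : ℤ) + 2)) :=
    congrArg (vt ^ ·) (by ring)
  have f4 : vt ^ (1 - 2 * ((j : ℤ) + 1)) * vt ^ (-2 : ℤ) = vt ^ (1 - 2 * ((j : ℤ) + 2)) := by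
    rw [← zpow_add₀ ht]
    exact congrArg (vt ^ ·) (by ring)
  have f5 : vt ^ (5 - 4 * ((j : ℤ) + 1)) * vt ^ (-4 : ℤ) = vt ^ (5 - 4 * ((j : ℤ) + 2)) := by
    rw [← zpow_add₀ ht]
    exact congrArg (vt ^ ·) (by ring)
  simp only [e2, e4, f1, f2, f4, f5, f3]
  congr 1
  · -- prefactor
    have hy : (1 : K) - vt ^ (2 * (j + 2)) ≠ 0 := h1t _ (by omega)
    have hQ : poch (vt ^ 2) (vt ^ 2) (j + 1) ≠ 0 := poch_ne _
    have hA : ((vt : K) ^ ((j : ℤ) + 2 - 1)) ^ (-((j : ℤ) + 2)) =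
        (vt ^ 2 * vt ^ ((j : ℤ) + 1 - 1)) ^ (-((j : ℤ) + 1)) := by
      rw [← zpow_natCast vt 2, ← zpow_add₀ ht, ← zpow_mul, ← zpow_mul]
      congr 1; ring
    have hB : poch (vt ^ (2 * (j + 2))) (vt ^ 2) (j + 2) =
        (1 - vt ^ (2 * (j + 2))) * poch ((vt ^ 2) ^ 2 * vt ^ (2 * (j + 1))) (vt ^ 2) (j + 1) := by
      rw [poch_succ']
      congr 2
      rw [← pow_add, ← pow_mul, ← pow_add]
      congr 1; omega
    have hC : poch (vt ^ 2) (vt ^ 2) (j + 2) =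
        poch (vt ^ 2) (vt ^ 2) (j + 1) * (1 - vt ^ (2 * (j + 2))) := by
      rw [poch, Finset.prod_range_succ, ← poch]
      have hx : ((vt : K) ^ 2) ^ (j + 1) * vt ^ 2 = vt ^ (2 * (j + 2)) := by
        ring
      rw [hx]
    rw [hA, hB, hC]
    field_simp
  · -- sums
    apply sum_ext
    · intro k hk
      ring
    · -- vanishing term at k = j + 2
      have hp : poch (vt ^ (2 - 2 * ((j : ℤ) + 2))) (vt ^ 2) (j + 2) = 0 := by
        rw [poch]
        apply Finset.prod_eq_zero (i := j + 1) (by simp)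
        have he : ((2 * (j + 1) : ℕ) : ℤ) + (2 - 2 * ((j : ℤ) + 2)) = 0 := by push_cast; ring
        rw [← pow_mul, ← zpow_natCast vt (2 * (j + 1)), ← zpow_add₀ ht, he, zpow_zero, sub_self]
      simp [hp]
end
end

section
/- One has C_{−1}(j) = δ_{j,0} in K for all j ∈ ℕ; that is, C_{−1}(0) = 1 and, for every j ≥ 1, Σ_{i=0}^{j} B(1,i) · binom(2j−1, j−i) = 0. (In the paper's notation this is C(1,j) = δ_{j,0}, the specialization s = 1, m = −1.) -/
open Finset

noncomputable section

lemma poch_zero' (z u : K) : poch z u 0 = 1 := by simp [poch]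

lemma poch_one' (z u : K) : poch z u 1 = 1 - z := by simp [poch]

lemma poch_one_eq_zero (u : K) {k : ℕ} (hk : k ≠ 0) : poch 1 u k = 0 := by
  apply Finset.prod_eq_zero (Finset.mem_range.mpr (Nat.pos_of_ne_zero hk))
  simp

lemma vt_sq_ne_one : (1 : K) - vt ^ 2 ≠ 0 := by
  have h : (1 : K) - vt ^ 2 =
      algebraMap (MvPolynomial (Fin 3) ℚ) K (1 - MvPolynomial.X 2 ^ 2) := by
    simp [vt, map_sub, map_pow]
  rw [h]
  intro hc
  have h0 : (1 - MvPolynomial.X 2 ^ 2 : MvPolynomial (Fin 3) ℚ) = 0 :=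
    IsFractionRing.injective (MvPolynomial (Fin 3) ℚ) K (by simpa using hc)
  have := congrArg (MvPolynomial.eval (fun _ => (0:ℚ))) h0
  simp at this

lemma B_one_zero : B 1 0 = 1 := by simp [B]

lemma B_one_ge_two {i : ℕ} (h : 2 ≤ i) : B 1 i = 0 := by
  have hi : i ≠ 0 := by omega
  rw [B, if_neg hi, one_pow, poch_one_eq_zero (vt ^ 2) (by omega : i - 1 ≠ 0)]
  ring

lemma B_one_one : B 1 1 = -1 := by
  rw [B, if_neg one_ne_zero]
  have hs : ∑ k ∈ range 2,
        (vt ^ (2 * k) * poch (-((1:K) * va ^ 2)) (vt ^ 2) k * poch (-((1:K) * vc ^ 2)) (vt ^ 2) k *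
            poch ((1:K) ^ 2 * vt ^ (2 * ((1:ℕ) : ℤ) - 2)) (vt ^ 2) k *
            poch (vt ^ (-(2 * ((1:ℕ) : ℤ)))) (vt ^ 2) k) /
          (poch (vt ^ 2) (vt ^ 2) k * poch (-(1:K)) (vt ^ 2) k * poch (-((1:K) * vt)) (vt ^ 2) k *
            poch ((1:K) ^ 2 * va ^ 2 * vc ^ 2 * vt⁻¹) (vt ^ 2) k) = 1 := by
    rw [Finset.sum_range_succ, Finset.sum_range_one]
    norm_num [poch_zero', poch_one']
  rw [hs]
  norm_num [poch_zero', poch_one']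
  have h := vt_sq_ne_one
  field_simp
  norm_num [zpow_two]

lemma binomZ_succ (n : ℤ) (k : ℕ) :
    binomZ n (k + 1) = binomZ n k * ((n : ℚ) - k) / (k + 1) := by
  have h1 : ((k.factorial : ℚ)) ≠ 0 := Nat.cast_ne_zero.mpr k.factorial_ne_zero
  have h2 : ((k : ℚ) + 1) ≠ 0 := by positivity
  rw [binomZ, binomZ, prod_range_succ, Nat.factorial_succ]
  push_cast
  rw [div_mul_eq_mul_div, div_div, div_eq_div_iff (by positivity) (by positivity)]
  ring

lemma binom_key (m : ℕ) : binomZ (2 * m + 1) (m + 1) = binomZ (2 * m + 1) m := by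
  rw [binomZ_succ]
  have h : ((2 * (m : ℤ) + 1 : ℤ) : ℚ) - m = (m : ℚ) + 1 := by push_cast; ring
  rw [h, mul_div_assoc, div_self (by positivity), mul_one]

/-- Proposition 7.2 of Hoshino–Shiraishi: `C_{−1}(j) = δ_{j,0}`. -/
theorem C_neg_one (j : ℕ) : Cc (-1) j = if j = 0 then 1 else 0 := by
  match j with
  | 0 => simp [Cc, B, binomZ]
  | (m + 1) =>
    rw [if_neg (Nat.succ_ne_zero m)]
    have hw : (vt : K) ^ ((-1 : ℤ) + 1) = 1 := by norm_num
    have h2m : (-1 : ℤ) + 2 * ((m + 1 : ℕ) : ℤ) = 2 * m + 1 := by push_cast; ring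
    rw [Cc, hw, h2m]
    have hsub : ∑ i ∈ range (m + 1 + 1),
          B 1 i * ((binomZ (2 * m + 1) (m + 1 - i) : ℚ) : K)
        = ∑ i ∈ range 2, B 1 i * ((binomZ (2 * m + 1) (m + 1 - i) : ℚ) : K) := by
      refine (Finset.sum_subset ?_ ?_).symm
      · intro x hx
        simp only [Finset.mem_range] at hx ⊢
        omega
      · intro x _ hx
        simp only [Finset.mem_range, not_lt] at hx
        rw [B_one_ge_two hx, zero_mul]
    rw [hsub, Finset.sum_range_succ, Finset.sum_range_one, B_one_zero, B_one_one,
      Nat.sub_zero, Nat.add_sub_cancel, binom_key m]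
    ring
end
end

section
/- For all m, j ∈ ℕ one has the identity of polynomials in ℤ[t]: t^{2j} · [m+1]_{t²} · gauss(m+2j, j)_{t²} = [m+j+1]_{t²} · ( gauss(m+2j, j)_{t²} − gauss(m+2j, j−1)_{t²} ). (This is the equality of the two expressions for the type Cₙ Kostka polynomial K^{(Cₙ)}_{(1^r)(1^{r−2j})}(t) with m = n−r in Theorem 1.7 of the paper; the right-hand side is the t²-ballot number times t^{2j}.) -/
open Finset Polynomial

noncomputable section

/-- The Gaussian (q-)binomial coefficient `gauss(n,k)_q = ∏_{i=1}^{k} (1−q^{n−k+i})/(1−q^i) ∈ ℤ[q]`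
for `0 ≤ k ≤ n`, and `0` for `k > n`.  Since `∏_{i=1}^{k}(1−q^{n−k+i}) = (−1)^k ∏_{i=1}^{k}(q^{n−k+i}−1)`
and likewise for the denominator, it is computed as the exact quotient
`∏_{i=1}^{k}(q^{n−k+i}−1) /ₘ ∏_{i=1}^{k}(q^i−1)` by the monic polynomial `∏_{i=1}^{k}(q^i−1)`. -/
def gauss (n k : ℕ) : Polynomial ℤ :=
  if k ≤ n then
    (∏ i ∈ range k, (X ^ (n - k + i + 1) - 1)) /ₘ (∏ i ∈ range k, (X ^ (i + 1) - 1))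
  else 0

/-- The q-integer `[n]_q = 1 + q + ⋯ + q^{n−1} ∈ ℤ[q]`. -/
def qint (n : ℕ) : Polynomial ℤ := ∑ i ∈ range n, X ^ i

/-- Recursive definition of the Gaussian binomial via the q-Pascal rule. -/
def Gr : ℕ → ℕ → Polynomial ℤ
  | _, 0 => 1
  | 0, _ + 1 => 0
  | n + 1, k + 1 => Gr n k + X ^ (k + 1) * Gr n (k + 1)

def D (k : ℕ) : Polynomial ℤ := ∏ i ∈ range k, (X ^ (i + 1) - 1)

lemma D_monic (k : ℕ) : (D k).Monic := by
  refine monic_prod_of_monic _ _ fun i _ => ?_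
  simpa using monic_X_pow_sub_C (1 : ℤ) (Nat.succ_ne_zero i)

lemma D_ne_zero (k : ℕ) : D k ≠ 0 := (D_monic k).ne_zero

lemma D_succ (k : ℕ) : D (k + 1) = D k * (X ^ (k + 1) - 1) := by
  simp [D, prod_range_succ]

lemma Gr_zero : ∀ n, Gr n 0 = 1
  | 0 => rfl
  | _ + 1 => rfl

lemma Gr_zero_of_lt : ∀ n k, n < k → Gr n k = 0
  | _, 0, h => by omega
  | 0, k + 1, _ => rfl
  | n + 1, k + 1, h => by
    rw [Gr, Gr_zero_of_lt n k (by omega), Gr_zero_of_lt n (k + 1) (by omega)]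
    ring

lemma Gr_mul : ∀ n k, k ≤ n → Gr n k * D k = ∏ i ∈ range k, (X ^ (n - k + i + 1) - 1)
  | n, 0, _ => by simp [Gr, D]
  | 0, k + 1, h => by omega
  | n + 1, k + 1, h => by
    have hk : k ≤ n := by omega
    have hnum : ∏ i ∈ range (k + 1), (X ^ (n + 1 - (k + 1) + i + 1) - 1)
        = (∏ i ∈ range k, (X ^ (n - k + i + 1) - 1)) * (X ^ (n + 1) - (1 : Polynomial ℤ)) := by
      rw [prod_range_succ]
      congr 1
      · exact prod_congr rfl fun i _ => by congr 2; omega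
      · congr 2
        omega
    rw [hnum]
    have h1 := Gr_mul n k hk
    rcases eq_or_lt_of_le hk with heq | hlt
    · subst heq
      rw [Gr, Gr_zero_of_lt k (k + 1) (by omega), D_succ]
      calc (Gr k k + X ^ (k + 1) * 0) * (D k * (X ^ (k + 1) - 1))
          = (Gr k k * D k) * (X ^ (k + 1) - 1) := by ring
        _ = _ := by rw [h1]
    · have hk1 : k + 1 ≤ n := hlt
      have h2 := Gr_mul n (k + 1) hk1
      have hnum2 : ∏ i ∈ range (k + 1), (X ^ (n - (k + 1) + i + 1) - 1)
          = (∏ i ∈ range k, (X ^ (n - k + i + 1) - 1)) *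
              ((X : Polynomial ℤ) ^ (n - k) - 1) := by
        rw [prod_range_succ']
        congr 1
        · exact prod_congr rfl fun i _ => by congr 2; omega
        · congr 2
          omega
      have hpow : X ^ (k + 1) * (X ^ (n - k)) = (X : Polynomial ℤ) ^ (n + 1) := by
        rw [← pow_add]
        congr 1
        omega
      rw [Gr, show (Gr n k + X ^ (k + 1) * Gr n (k + 1)) * D (k + 1)
          = (Gr n k * D k) * (X ^ (k + 1) - 1)
            + X ^ (k + 1) * (Gr n (k + 1) * D (k + 1)) from by rw [D_succ]; ring,
        h1, h2, hnum2, ← hpow]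
      ring

lemma gauss_eq (n k : ℕ) (h : k ≤ n) : gauss n k = Gr n k := by
  have h1 : (∏ i ∈ range k, ((X : Polynomial ℤ) ^ (i + 1) - 1)) = D k := rfl
  rw [gauss, if_pos h, h1, ← Gr_mul n k h, mul_comm]
  exact mul_divByMonic_cancel_left _ (D_monic k)

lemma qint_mul (n : ℕ) : qint n * (X - 1) = X ^ n - 1 := geom_sum_mul X n

lemma Xsub1_ne : (X - 1 : Polynomial ℤ) ≠ 0 := by
  simpa using X_sub_C_ne_zero (1 : ℤ)

lemma key (m j : ℕ) :
    qint (m + j + 2) * Gr (m + 2 * (j + 1)) j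
      = qint (j + 1) * Gr (m + 2 * (j + 1)) (j + 1) := by
  set N := m + 2 * (j + 1) with hN
  apply mul_right_cancel₀ (D_ne_zero (j + 1))
  have g1 := Gr_mul N j (by omega)
  have g2 := Gr_mul N (j + 1) (by omega)
  have hsplit : ∏ i ∈ range (j + 1), (X ^ (N - (j + 1) + i + 1) - 1)
      = (∏ i ∈ range j, (X ^ (N - j + i + 1) - 1)) *
          ((X : Polynomial ℤ) ^ (m + j + 2) - 1) := by
    rw [prod_range_succ']
    congr 1
    · exact prod_congr rfl fun i _ => by congr 2; omega
    · congr 2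
      omega
  calc qint (m + j + 2) * Gr N j * D (j + 1)
      = qint (m + j + 2) * (Gr N j * D j) * (X ^ (j + 1) - 1) := by rw [D_succ]; ring
    _ = qint (m + j + 2) * (∏ i ∈ range j, (X ^ (N - j + i + 1) - 1))
          * (qint (j + 1) * (X - 1)) := by rw [g1, qint_mul]
    _ = qint (j + 1) * ((∏ i ∈ range j, (X ^ (N - j + i + 1) - 1))
          * (qint (m + j + 2) * (X - 1))) := by ring
    _ = qint (j + 1) * ((∏ i ∈ range j, (X ^ (N - j + i + 1) - 1))
          * ((X : Polynomial ℤ) ^ (m + j + 2) - 1)) := by rw [qint_mul]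
    _ = qint (j + 1) * Gr N (j + 1) * D (j + 1) := by rw [← hsplit, ← g2]; ring

lemma qint_split (m j : ℕ) :
    qint (m + j + 2) - qint (j + 1) = X ^ (j + 1) * qint (m + 1) := by
  apply mul_right_cancel₀ Xsub1_ne
  rw [sub_mul, qint_mul, qint_mul, mul_assoc, qint_mul]
  have hpow : (X : Polynomial ℤ) ^ (j + 1) * X ^ (m + 1) = X ^ (m + j + 2) := by
    rw [← pow_add]
    congr 1
    omega
  rw [mul_sub, hpow]
  ring

lemma main_poly (m j : ℕ) :
    X ^ (j + 1) * qint (m + 1) * Gr (m + 2 * (j + 1)) (j + 1)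
      = qint (m + (j + 1) + 1) *
          (Gr (m + 2 * (j + 1)) (j + 1) - Gr (m + 2 * (j + 1)) j) := by
  have hk := key m j
  have hs := qint_split m j
  have hidx : m + (j + 1) + 1 = m + j + 2 := by omega
  rw [hidx]
  linear_combination (- Gr (m + 2 * (j + 1)) (j + 1)) * hs + hk

/-- The two expressions for the type `Cₙ` Kostka polynomial `K^{(Cₙ)}_{(1^r)(1^{r−2j})}(t)`
(with `m = n−r`) agree:
`t^{2j}·[m+1]_{t²}·gauss(m+2j,j)_{t²} = [m+j+1]_{t²}·(gauss(m+2j,j)_{t²} − gauss(m+2j,j−1)_{t²})`,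
with the convention `gauss(n,−1) = 0`. -/
theorem kostkaC_two_forms (m j : ℕ) :
    X ^ (2 * j) * (qint (m + 1)).comp (X ^ 2) * (gauss (m + 2 * j) j).comp (X ^ 2)
      = (qint (m + j + 1)).comp (X ^ 2) *
          ((gauss (m + 2 * j) j).comp (X ^ 2) -
            (if j = 0 then 0 else (gauss (m + 2 * j) (j - 1)).comp (X ^ 2))) := by
  rcases j with _ | j
  · have h0 : gauss (m + 2 * 0) 0 = 1 := by
      rw [gauss_eq _ _ (by omega), Gr_zero]
    simp [h0]
  · have e1 : gauss (m + 2 * (j + 1)) (j + 1) = Gr (m + 2 * (j + 1)) (j + 1) :=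
      gauss_eq _ _ (by omega)
    have e2 : gauss (m + 2 * (j + 1)) (j + 1 - 1) = Gr (m + 2 * (j + 1)) j := by
      simpa using gauss_eq (m + 2 * (j + 1)) j (by omega)
    have H := congrArg (fun p : Polynomial ℤ => p.comp (X ^ 2)) (main_poly m j)
    simp only [mul_comp, sub_comp, X_pow_comp] at H
    rw [if_neg (Nat.succ_ne_zero j), e1, e2, pow_mul]
    exact H
end
end

section
/- For all m, j ∈ ℕ, the polynomial gauss(m+2j, j)_q − gauss(m+2j, j−1)_q ∈ ℤ[q] has nonnegative coefficients. (This is the q-ballot number; for m = 0 it is the q-Catalan number. It implies the assertion of Theorem 1.7 of the paper that the Kostka polynomials K^{(Cₙ)}_{(1^r)(1^{r−2j})}(t) = gauss(n−r+2j,j)_{t²} − gauss(n−r+2j,j−1)_{t²} are polynomials in t with nonnegative integral coefficients.) -/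
open Finset Polynomial

noncomputable section

/-- numerator product -/
def Pnum (n k : ℕ) : Polynomial ℤ := ∏ i ∈ range k, (X ^ (n - k + i + 1) - 1)

/-- denominator product -/
def Dden (k : ℕ) : Polynomial ℤ := ∏ i ∈ range k, (X ^ (i + 1) - 1)

lemma Dden_monic (k : ℕ) : (Dden k).Monic :=
  monic_prod_of_monic _ _ fun i _ => by
    simpa using monic_X_pow_sub_C (1 : ℤ) (Nat.succ_ne_zero i)

lemma Dden_succ (k : ℕ) : Dden (k+1) = Dden k * (X ^ (k+1) - 1) := by
  simp [Dden, prod_range_succ]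

lemma Pnum_eval (a k : ℕ) : Pnum (a + k) k = ∏ i ∈ range k, (X ^ (a + i + 1) - 1) := by
  unfold Pnum
  refine prod_congr rfl fun i _ => by rw [show a + k - k + i + 1 = a + i + 1 by omega]

lemma Pnum_aksucc (a k : ℕ) :
    Pnum (a + k + 1) (k + 1) = (∏ i ∈ range k, (X ^ (a + i + 1) - 1)) * (X ^ (a + k + 1) - 1) := by
  have : a + k + 1 = a + (k + 1) := by omega
  rw [this, Pnum_eval, prod_range_succ, show a + (k+1) = a + k + 1 by omega]

lemma Pnum_ak_ksucc (a k : ℕ) (ha : 1 ≤ a) :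
    Pnum (a + k) (k + 1) = (X ^ a - 1) * ∏ i ∈ range k, (X ^ (a + i + 1) - 1) := by
  obtain ⟨b, rfl⟩ : ∃ b, a = b + 1 := ⟨a - 1, by omega⟩
  have : b + 1 + k = b + (k + 1) := by omega
  rw [this, Pnum_eval, prod_range_succ', mul_comm]
  congr 1
  refine prod_congr rfl fun i _ => by rw [show b + (i + 1) + 1 = b + 1 + i + 1 by omega]

lemma P_pascalA (a k : ℕ) (ha : 1 ≤ a) :
    Pnum (a + k + 1) (k + 1)
      = (X ^ (k+1) - 1) * Pnum (a + k) k + X ^ (k+1) * Pnum (a + k) (k + 1) := by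
  rw [Pnum_aksucc, Pnum_eval, Pnum_ak_ksucc a k ha]
  have hx : (X : Polynomial ℤ) ^ (k+1) * X ^ a = X ^ (a + k + 1) := by
    rw [← pow_add]; congr 1; omega
  rw [← hx]; ring

lemma P_pascalB (a k : ℕ) (ha : 1 ≤ a) :
    Pnum (a + k + 1) (k + 1)
      = Pnum (a + k) (k + 1) + X ^ a * (X ^ (k+1) - 1) * Pnum (a + k) k := by
  rw [Pnum_aksucc, Pnum_eval, Pnum_ak_ksucc a k ha]
  have hx : (X : Polynomial ℤ) ^ a * X ^ (k+1) = X ^ (a + k + 1) := by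
    rw [← pow_add]; norm_num [Nat.add_assoc]
  rw [← hx]; ring

lemma P_self (k : ℕ) : Pnum k k = Dden k := by
  unfold Pnum Dden
  refine prod_congr rfl fun i _ => by rw [show k - k + i + 1 = i + 1 by omega]

lemma P_sym (k : ℕ) : Pnum (2*k+1) (k+1) = (X ^ (k+1) - 1) * Pnum (2*k+1) k := by
  have L : Pnum (2*k+1) (k+1) = ∏ i ∈ range (k+1), (X ^ (k+i+1) - 1) := by
    rw [show 2*k+1 = k + (k+1) by omega, Pnum_eval]
  have R : Pnum (2*k+1) k = ∏ i ∈ range k, (X ^ (k+1+i+1) - 1) := by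
    rw [show 2*k+1 = (k+1) + k by omega, Pnum_eval]
  rw [L, R, prod_range_succ', mul_comm]
  congr 1
  · refine prod_congr rfl fun i _ => by rw [show k + (i + 1) + 1 = k + 1 + i + 1 by omega]

lemma Dden_dvd_Pnum : ∀ n k : ℕ, k ≤ n → Dden k ∣ Pnum n k := by
  intro n
  induction n with
  | zero => intro k hk; interval_cases k; simp [Pnum, Dden]
  | succ n ih =>
    intro k hk
    rcases k with _ | j
    · simp [Pnum, Dden]
    rcases Nat.lt_or_ge j n with h | h
    · obtain ⟨a, ha, rfl⟩ : ∃ a, 1 ≤ a ∧ n = a + j := ⟨n - j, by omega, by omega⟩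
      rw [show a + j + 1 = (a + j) + 1 by rfl, P_pascalA a j ha]
      refine dvd_add ?_ ?_
      · rw [Dden_succ, mul_comm ((X : Polynomial ℤ) ^ (j+1) - 1)]
        exact mul_dvd_mul (ih j (by omega)) dvd_rfl
      · exact Dvd.dvd.mul_left (ih (j+1) (by omega)) _
    · have : j + 1 = n + 1 := by omega
      rw [this, P_self]

lemma gauss_mul {n k : ℕ} (h : k ≤ n) : gauss n k * Dden k = Pnum n k := by
  have hm := Dden_monic k
  have hd := Dden_dvd_Pnum n k h
  have hmod : Pnum n k %ₘ Dden k = 0 := (modByMonic_eq_zero_iff_dvd hm).2 hd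
  have := modByMonic_add_div (Pnum n k) (Dden k)
  rw [hmod, zero_add] at this
  rw [gauss, if_pos h]
  rw [mul_comm]
  exact this

lemma gauss_zero (n : ℕ) : gauss n 0 = 1 := by
  simp [gauss]

lemma gauss_of_gt {n k : ℕ} (h : n < k) : gauss n k = 0 := by
  rw [gauss, if_neg (by omega)]

lemma Dden_ne_zero (k : ℕ) : Dden k ≠ 0 := (Dden_monic k).ne_zero

lemma pascalA (a k : ℕ) (ha : 1 ≤ a) :
    gauss (a + k + 1) (k + 1) = gauss (a + k) k + X ^ (k+1) * gauss (a + k) (k + 1) := by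
  apply mul_right_cancel₀ (Dden_ne_zero (k+1))
  rw [gauss_mul (by omega), P_pascalA a k ha, ← gauss_mul (by omega : k ≤ a + k),
    ← gauss_mul (by omega : k + 1 ≤ a + k), Dden_succ]
  ring

lemma pascalB (a k : ℕ) (ha : 1 ≤ a) :
    gauss (a + k + 1) (k + 1) = gauss (a + k) (k + 1) + X ^ a * gauss (a + k) k := by
  apply mul_right_cancel₀ (Dden_ne_zero (k+1))
  rw [gauss_mul (by omega), P_pascalB a k ha, ← gauss_mul (by omega : k ≤ a + k),
    ← gauss_mul (by omega : k + 1 ≤ a + k), Dden_succ]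
  ring

lemma gauss_sym (k : ℕ) : gauss (2*k+1) (k+1) = gauss (2*k+1) k := by
  apply mul_right_cancel₀ (Dden_ne_zero (k+1))
  rw [gauss_mul (by omega), P_sym, ← gauss_mul (by omega : k ≤ 2*k+1), Dden_succ]
  ring

lemma gauss_one (n : ℕ) (hn : 1 ≤ n) : gauss n 1 = ∑ i ∈ range n, X ^ i := by
  apply mul_right_cancel₀ (Dden_ne_zero 1)
  rw [gauss_mul hn]
  have hD : Dden 1 = X - 1 := by simp [Dden]
  have hP : Pnum n 1 = X ^ n - 1 := by
    obtain ⟨a, rfl⟩ : ∃ a, n = a + 1 := ⟨n - 1, by omega⟩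
    simp [Pnum]
  rw [hD, hP, geom_sum_mul]

/-- nonnegative coefficients -/
def NN (f : Polynomial ℤ) : Prop := ∀ i, 0 ≤ f.coeff i

lemma NN.add {f g : Polynomial ℤ} (hf : NN f) (hg : NN g) : NN (f + g) := fun i => by
  rw [coeff_add]; exact add_nonneg (hf i) (hg i)

lemma NN.xpow_mul {f : Polynomial ℤ} (hf : NN f) (a : ℕ) : NN (X ^ a * f) := fun i => by
  rw [mul_comm, coeff_mul_X_pow']
  split_ifs
  · exact hf _
  · exact le_refl 0

lemma NN_geom_sub (n t : ℕ) (h : t < n) : NN ((∑ i ∈ range n, X ^ i) - X ^ t) := by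
  intro i
  rw [coeff_sub, finset_sum_coeff]
  simp only [coeff_X_pow]
  rw [Finset.sum_ite_eq (range n) i (fun _ => (1:ℤ))]
  split_ifs with h1 h2 <;> simp_all

lemma idI (s t k : ℕ) :
    gauss (s+2*k+5) (k+2) - X^(t+1) * gauss (s+2*k+5) (k+1)
      = X^(k+2) * (gauss (s+2*k+4) (k+2) - X^t * gauss (s+2*k+4) (k+1))
        + (gauss (s+2*k+4) (k+1) - X^(t+1) * gauss (s+2*k+4) k) := by
  have hA1 := pascalA (s+k+3) (k+1) (by omega)
  rw [show s+k+3+(k+1)+1 = s+2*k+5 by omega, show s+k+3+(k+1) = s+2*k+4 by omega] at hA1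
  have hA2 := pascalA (s+k+4) k (by omega)
  rw [show s+k+4+k+1 = s+2*k+5 by omega, show s+k+4+k = s+2*k+4 by omega] at hA2
  rw [hA1, hA2]; ring

lemma idII (s k : ℕ) :
    gauss (s+2*k+5) (k+2) - gauss (s+2*k+5) (k+1)
      = (gauss (s+2*k+4) (k+2) - gauss (s+2*k+4) (k+1))
        + X^(s+k+3) * (gauss (s+2*k+4) (k+1) - X^1 * gauss (s+2*k+4) k) := by
  have hB1 := pascalB (s+k+3) (k+1) (by omega)
  rw [show s+k+3+(k+1)+1 = s+2*k+5 by omega, show s+k+3+(k+1) = s+2*k+4 by omega] at hB1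
  have hB2 := pascalB (s+k+4) k (by omega)
  rw [show s+k+4+k+1 = s+2*k+5 by omega, show s+k+4+k = s+2*k+4 by omega] at hB2
  rw [hB1, hB2]; ring

lemma idIIIa (k : ℕ) :
    gauss (2*k+4) (k+2) - gauss (2*k+4) (k+1)
      = X^(k+2) * (gauss (2*k+3) (k+1) - X^1 * gauss (2*k+3) k) := by
  have hB1 := pascalB (k+2) (k+1) (by omega)
  rw [show k+2+(k+1)+1 = 2*k+4 by omega, show k+2+(k+1) = 2*k+3 by omega] at hB1
  have hB2 := pascalB (k+3) k (by omega)
  rw [show k+3+k+1 = 2*k+4 by omega, show k+3+k = 2*k+3 by omega] at hB2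
  have hS := gauss_sym (k+1)
  rw [show 2*(k+1)+1 = 2*k+3 by omega] at hS
  rw [hB1, hB2, hS]; ring

lemma idIIIb (k : ℕ) :
    gauss (2*k+4) (k+2) - X^1 * gauss (2*k+4) (k+1)
      = gauss (2*k+3) (k+1) - X^1 * gauss (2*k+3) k := by
  have hA1 := pascalA (k+2) (k+1) (by omega)
  rw [show k+2+(k+1)+1 = 2*k+4 by omega, show k+2+(k+1) = 2*k+3 by omega] at hA1
  have hA2 := pascalA (k+3) k (by omega)
  rw [show k+3+k+1 = 2*k+4 by omega, show k+3+k = 2*k+3 by omega] at hA2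
  have hS := gauss_sym (k+1)
  rw [show 2*(k+1)+1 = 2*k+3 by omega] at hS
  rw [hA1, hA2, hS]; ring

lemma main_nn : ∀ k s t, t ≤ s + 1 →
    NN (gauss (s + 2*(k+1)) (k+1) - X^t * gauss (s + 2*(k+1)) k) := by
  intro k
  induction k with
  | zero =>
    intro s t ht
    rw [show s + 2*(0+1) = s+2 by omega, gauss_zero, mul_one, gauss_one (s+2) (by omega)]
    exact NN_geom_sub (s+2) t (by omega)
  | succ k ih =>
    intro s
    induction s with
    | zero =>
      intro t ht
      rw [show 0 + 2*(k+1+1) = 2*k+4 by omega, show k+1+1 = k+2 by omega]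
      interval_cases t
      · have h := ih 1 1 (by omega)
        rw [show 1 + 2*(k+1) = 2*k+3 by omega] at h
        rw [pow_zero, one_mul, idIIIa k]
        exact h.xpow_mul (k+2)
      · have h := ih 1 1 (by omega)
        rw [show 1 + 2*(k+1) = 2*k+3 by omega] at h
        rw [idIIIb k]
        exact h
    | succ s ih2 =>
      intro t ht
      rw [show s+1 + 2*(k+1+1) = s+2*k+5 by omega, show k+1+1 = k+2 by omega]
      rcases t with _ | t'
      · rw [pow_zero, one_mul, idII s k]
        have h1 := ih2 0 (by omega)
        rw [show s + 2*(k+1+1) = s+2*k+4 by omega, show k+1+1 = k+2 by omega,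
          pow_zero, one_mul] at h1
        have h2 := ih (s+2) 1 (by omega)
        rw [show s+2 + 2*(k+1) = s+2*k+4 by omega] at h2
        exact h1.add (h2.xpow_mul _)
      · rw [idI s t' k]
        have h1 := ih2 t' (by omega)
        rw [show s + 2*(k+1+1) = s+2*k+4 by omega, show k+1+1 = k+2 by omega] at h1
        have h2 := ih (s+2) (t'+1) (by omega)
        rw [show s+2 + 2*(k+1) = s+2*k+4 by omega] at h2
        exact (h1.xpow_mul _).add h2

/-- The q-ballot number `gauss(m+2j,j)_q − gauss(m+2j,j−1)_q` (with `gauss(n,−1) = 0`;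
for `m = 0` the q-Catalan number) has nonnegative coefficients. -/
theorem qBallot_nonneg_coeffs (m j : ℕ) (i : ℕ) :
    0 ≤ (gauss (m + 2 * j) j - if j = 0 then 0 else gauss (m + 2 * j) (j - 1)).coeff i := by
  rcases j with _ | jj
  · rw [if_pos rfl, sub_zero, gauss_zero, coeff_one]
    split_ifs <;> norm_num
  · rw [if_neg (Nat.succ_ne_zero jj), Nat.add_sub_cancel]
    have h := main_nn jj m 0 (by omega)
    rw [pow_zero, one_mul] at h
    exact h i
end
end
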